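/- Let (F_i)_{i=0}^{n} be a filtration on a probability space, n ≥ 2, and let X_1, …, X_n be real random variables such that X_i is F_i-measurable, E[X_i | F_{i−1}] = 0, and |X_i| ≤ b almost surely for some b > 0. Then for every δ ∈ (0, e^{−1}): P( |Σ_{i=1}^{n} X_i| ≤ 8·√(Σ_{i=1}^{n} X_i² · ln(1/δ)) + 16·b·ln(1/δ) ) ≥ 1 − 6·δ·log₂(n). -/

import Mathlib

open MeasureTheory Finset

open scoped ENNReal


lemma eb_aux_expineq {y : ℝ} (hy : |y| ≤ 1/2) : Real.exp (y - y^2) ≤ 1 + y := by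
  obtain ⟨h1, h2⟩ := abs_le.mp hy
  have hpos : (0:ℝ) < 1 + y := by linarith
  set f : ℝ → ℝ := fun y => Real.log (1+y) - y + y^2 with hf
  have hd : ∀ x : ℝ, -1 < x → HasDerivAt f (x*(1+2*x)/(1+x)) x := by
    intro x hx
    have hx1 : (1:ℝ) + x ≠ 0 := by linarith
    have h1 : HasDerivAt (fun y : ℝ => 1 + y) 1 x := by
      simpa using (hasDerivAt_id x).const_add (1:ℝ)
    have h2 : HasDerivAt (fun y : ℝ => Real.log (1+y)) ((1+x)⁻¹ * 1) x :=
      (Real.hasDerivAt_log hx1).comp x h1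
    have h3 := (h2.sub (hasDerivAt_id x)).add (hasDerivAt_pow 2 x)
    refine h3.congr_deriv ?_
    field_simp
    ring
  have hf0 : f 0 = 0 := by simp [hf]
  have hlog : y - y^2 ≤ Real.log (1+y) := by
    have key : 0 ≤ f y := by
      rcases le_total y 0 with hy0 | hy0
      · have hanti : AntitoneOn f (Set.Icc (-(1/2)) 0) := by
          apply antitoneOn_of_deriv_nonpos (convex_Icc _ _)
          · intro x hx
            exact (hd x (by simp at hx; linarith [hx.1])).continuousAt.continuousWithinAt
          · intro x hx
            rw [interior_Icc] at hx
            exact (hd x (by linarith [hx.1])).differentiableAt.differentiableWithinAt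
          · intro x hx
            rw [interior_Icc] at hx
            rw [(hd x (by linarith [hx.1])).deriv]
            apply div_nonpos_of_nonpos_of_nonneg _ (by linarith [hx.1])
            nlinarith [hx.1, hx.2]
        have := hanti (Set.mem_Icc.mpr ⟨h1, hy0⟩) (Set.mem_Icc.mpr ⟨by norm_num, le_rfl⟩) hy0
        rwa [hf0] at this
      · have hmono : MonotoneOn f (Set.Icc 0 (1/2)) := by
          apply monotoneOn_of_deriv_nonneg (convex_Icc _ _)
          · intro x hx
            exact (hd x (by simp at hx; linarith [hx.1])).continuousAt.continuousWithinAt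
          · intro x hx
            rw [interior_Icc] at hx
            exact (hd x (by linarith [hx.1])).differentiableAt.differentiableWithinAt
          · intro x hx
            rw [interior_Icc] at hx
            rw [(hd x (by linarith [hx.1])).deriv]
            have := hx.1
            positivity
        have := hmono (Set.mem_Icc.mpr ⟨le_rfl, by norm_num⟩) (Set.mem_Icc.mpr ⟨hy0, h2⟩) hy0
        rwa [hf0] at this
    simp only [hf] at key
    linarith
  calc Real.exp (y - y^2) ≤ Real.exp (Real.log (1+y)) := Real.exp_le_exp.mpr hlog
    _ = 1 + y := Real.exp_log hpos


lemma eb_aux_div {c s v L : ℝ} (hc : 0 < c) (hv : 0 ≤ v)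
    (h : (1/c) * s - (1/c)^2 * v < L) : s ≤ c*L + v/c := by
  have heq : (1/c) * s - (1/c)^2 * v = s/c - v/c^2 := by ring
  rw [heq] at h
  have h3 : s / c < L + v / c^2 := by linarith
  have h4 : s < (L + v/c^2) * c := (div_lt_iff₀ hc).mp h3
  have h5 : (L + v/c^2)*c = c*L + v/c := by field_simp
  linarith

lemma eb_aux_det (b L : ℝ) (hb : 0 < b) (hL : 1 ≤ L) (n J : ℕ) (hn : 1 ≤ n) (h2J : n ≤ 2^J)
    (V s : ℝ) (hV0 : 0 ≤ V) (hVn : V ≤ n * b^2)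
    (h : ∀ j ≤ J, s ≤ 2*b*2^j * L + V / (2*b*2^j)) :
    s ≤ 8 * Real.sqrt (V * L) + 16 * b * L := by
  have hL0 : (0:ℝ) < L := lt_of_lt_of_le one_pos hL
  have hsq : 0 ≤ Real.sqrt (V*L) := Real.sqrt_nonneg _
  by_cases hV : V ≤ 4*b^2*L
  · have h0 := h 0 (Nat.zero_le J)
    have he : 2*b*(2:ℝ)^(0:ℕ) = 2*b := by norm_num
    rw [he] at h0
    have hd : V/(2*b) ≤ 2*b*L := by
      rw [div_le_iff₀ (by positivity)]; nlinarith
    nlinarith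
  · push_neg at hV
    have hVpos : 0 < V := lt_trans (by positivity) hV
    set r := Real.sqrt (V/L) with hr
    have hrpos : 0 < r := Real.sqrt_pos.mpr (by positivity)
    have hPJ : r ≤ 2*b*2^J := by
      have h1 : r ≤ Real.sqrt V := Real.sqrt_le_sqrt (div_le_self hV0 hL)
      have h2 : Real.sqrt V ≤ Real.sqrt ((n:ℝ)*b^2) := Real.sqrt_le_sqrt hVn
      have h3 : Real.sqrt ((n:ℝ)*b^2) = Real.sqrt n * b := by
        rw [Real.sqrt_mul (Nat.cast_nonneg n), Real.sqrt_sq hb.le]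
      have hn1 : (1:ℝ) ≤ (n:ℝ) := by exact_mod_cast hn
      have h4 : Real.sqrt (n:ℝ) ≤ (n:ℝ) := by
        have := Real.sqrt_le_sqrt (show (n:ℝ) ≤ (n:ℝ)^2 by nlinarith)
        rwa [Real.sqrt_sq (by positivity)] at this
      have h5 : (n:ℝ) ≤ 2^J := by exact_mod_cast h2J
      have hpJ : (0:ℝ) < 2^J := by positivity
      calc r ≤ Real.sqrt V := h1
        _ ≤ Real.sqrt n * b := by rw [← h3]; exact h2
        _ ≤ (2:ℝ)^J * b := mul_le_mul_of_nonneg_right (h4.trans h5) hb.le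
        _ ≤ 2*b*2^J := by nlinarith
    have hex : ∃ j, r ≤ 2*b*2^j := ⟨J, hPJ⟩
    classical
    set j0 := Nat.find hex with hj0
    have hj0J : j0 ≤ J := Nat.find_min' hex hPJ
    have hj0P : r ≤ 2*b*2^j0 := Nat.find_spec hex
    have hj0pos : 0 < j0 := by
      rcases Nat.eq_zero_or_pos j0 with h0 | h0
      · exfalso
        have := hj0P
        rw [h0] at this
        have h2b : 2*b < r := by
          rw [hr]
          have : (2*b) = Real.sqrt ((2*b)^2) := (Real.sqrt_sq (by positivity)).symm
          rw [this]
          apply Real.sqrt_lt_sqrt (by positivity)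
          rw [lt_div_iff₀ hL0]; nlinarith
        simp at this
        linarith
      · exact h0
    have hmin : ¬ (r ≤ 2*b*2^(j0-1)) := Nat.find_min hex (Nat.pred_lt hj0pos.ne')
    push_neg at hmin
    have hdouble : (2:ℝ)^j0 = 2 * 2^(j0-1) := by
      conv_lhs => rw [show j0 = (j0-1)+1 from (Nat.succ_pred_eq_of_pos hj0pos).symm]
      rw [pow_succ']
    have hc_lt : 2*b*2^j0 < 2*r := by
      rw [hdouble]; nlinarith
    have hkey := h j0 hj0J
    have hrL : r * L = Real.sqrt (V*L) := by
      have hLs : L = Real.sqrt (L^2) := (Real.sqrt_sq hL0.le).symm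
      rw [hr]
      conv_lhs => rw [hLs]
      rw [← Real.sqrt_mul (by positivity)]
      congr 1
      field_simp
      exact hLs
    have hVr : V / r = Real.sqrt (V*L) := by
      rw [hr, Real.sqrt_div hV0, div_div_eq_mul_div, Real.sqrt_mul hV0,
        div_eq_iff (ne_of_gt (Real.sqrt_pos.mpr hVpos))]
      have h7 : Real.sqrt V * Real.sqrt V = V := Real.mul_self_sqrt hV0
      linear_combination (-(Real.sqrt L)) * h7
    have hVdiv : V / (2*b*2^j0) ≤ V / r := by
      apply div_le_div_of_nonneg_left hV0 hrpos hj0P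
    have hcL : 2*b*2^j0 * L ≤ (2*r)*L := mul_le_mul_of_nonneg_right hc_lt.le hL0.le
    have : s ≤ 2*(r*L) + V/r := by nlinarith
    rw [hrL, hVr] at this
    nlinarith

lemma eb_aux_tail {Ω : Type*} {m0 : MeasurableSpace Ω} (μ : Measure Ω) [IsProbabilityMeasure μ]
    (F : Filtration ℕ m0) (n : ℕ)
    (X : ℕ → Ω → ℝ) (b : ℝ) (hb : 0 < b)
    (hmeas : ∀ i ∈ Finset.Icc 1 n, StronglyMeasurable[F i] (X i))
    (hcond : ∀ i ∈ Finset.Icc 1 n, μ[X i | F (i - 1)] =ᵐ[μ] 0)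
    (hbdd : ∀ i ∈ Finset.Icc 1 n, ∀ᵐ ω ∂μ, |X i ω| ≤ b)
    (l : ℝ) (hl : 0 < l) (hlb : l ≤ 1/(2*b)) (L : ℝ) :
    μ {ω | L ≤ l * (∑ i ∈ Finset.Icc 1 n, X i ω) - l^2 * ∑ i ∈ Finset.Icc 1 n, (X i ω)^2}
      ≤ ENNReal.ofReal (Real.exp (-L)) := by
  classical
  set W : ℕ → Ω → ℝ := fun k ω => ∏ i ∈ Finset.Icc 1 k, Real.exp (l * X i ω - l^2 * (X i ω)^2)
    with hWdef
  have hlb2 : ∀ x : ℝ, |x| ≤ b → |l * x| ≤ 1/2 := by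
    intro x hx
    rw [abs_mul, abs_of_nonneg hl.le]
    calc l * |x| ≤ l * b := mul_le_mul_of_nonneg_left hx hl.le
      _ ≤ (1/(2*b)) * b := mul_le_mul_of_nonneg_right hlb hb.le
      _ = 1/2 := by field_simp
  have hfacle : ∀ x : ℝ, |x| ≤ b → Real.exp (l * x - l^2 * x^2) ≤ Real.exp (l*b) := by
    intro x hx
    apply Real.exp_le_exp.mpr
    have h1 : l * x ≤ l * b := mul_le_mul_of_nonneg_left ((le_abs_self x).trans hx) hl.le
    have h2 : 0 ≤ l^2 * x^2 := by positivity
    linarith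
  have hXm : ∀ i ∈ Finset.Icc 1 n, Measurable (X i) :=
    fun i hi => ((hmeas i hi).mono (F.le i)).measurable
  have hfm : ∀ i ∈ Finset.Icc 1 n,
      Measurable (fun ω => Real.exp (l * X i ω - l^2 * (X i ω)^2)) := by
    intro i hi
    exact Real.measurable_exp.comp
      ((((hXm i hi).const_mul l).sub (((hXm i hi).pow_const 2).const_mul (l^2))))
  have hWm : ∀ k, k ≤ n → Measurable (W k) := by
    intro k hk
    exact Finset.measurable_prod _ fun i hi =>
      hfm i (Finset.Icc_subset_Icc_right hk hi)
  have hae : ∀ᵐ ω ∂μ, ∀ i, i ∈ Finset.Icc 1 n → |X i ω| ≤ b := by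
    rw [ae_all_iff]
    intro i
    by_cases hi : i ∈ Finset.Icc 1 n
    · filter_upwards [hbdd i hi] with ω h _
      exact h
    · filter_upwards with ω h
      exact absurd h hi
  have hWnonneg : ∀ k, ∀ ω, 0 ≤ W k ω := by
    intro k ω
    exact Finset.prod_nonneg fun i _ => (Real.exp_pos _).le
  have hWb : ∀ k, k ≤ n → ∀ᵐ ω ∂μ, ‖W k ω‖ ≤ Real.exp (l*b)^k := by
    intro k hk
    filter_upwards [hae] with ω hω
    rw [Real.norm_eq_abs, abs_of_nonneg (hWnonneg k ω)]
    calc W k ω ≤ ∏ _i ∈ Finset.Icc 1 k, Real.exp (l*b) := by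
          apply Finset.prod_le_prod (fun i _ => (Real.exp_pos _).le)
          intro i hi
          exact hfacle _ (hω i (Finset.Icc_subset_Icc_right hk hi))
      _ = Real.exp (l*b)^k := by rw [Finset.prod_const, Nat.card_Icc]; norm_num
  have hWi : ∀ k, k ≤ n → Integrable (W k) μ := by
    intro k hk
    exact (integrable_const _).mono' ((hWm k hk).aestronglyMeasurable) (hWb k hk)
  have hWint : ∀ k, k ≤ n → ∫ ω, W k ω ∂μ ≤ 1 := by
    intro k
    induction k with
    | zero =>
      intro _
      have h0 : W 0 = fun _ => 1 := by
        funext ω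
        simp [hWdef]
      rw [h0]
      simp
    | succ k ih =>
      intro hk1
      have hk : k ≤ n := Nat.le_of_succ_le hk1
      have hmem : k+1 ∈ Finset.Icc 1 n := Finset.mem_Icc.mpr ⟨Nat.le_add_left 1 k, hk1⟩
      set g : Ω → ℝ := fun ω => Real.exp (l * X (k+1) ω - l^2 * (X (k+1) ω)^2) with hgdef
      have hsplit : W (k+1) = W k * g := by
        funext ω
        rw [hWdef]
        exact Finset.prod_Icc_succ_top (Nat.le_add_left 1 k) _
      have hgm : Measurable g := hfm _ hmem
      have hgi : Integrable g μ := by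
        apply (integrable_const (Real.exp (l*b))).mono' hgm.aestronglyMeasurable
        filter_upwards [hbdd _ hmem] with ω hxb
        rw [Real.norm_eq_abs, abs_of_nonneg (Real.exp_pos _).le]
        exact hfacle _ hxb
      have hWg_int : Integrable (W k * g) μ := by
        rw [← hsplit]; exact hWi _ hk1
      have hGsm : StronglyMeasurable[F k] (W k) := by
        apply Finset.stronglyMeasurable_fun_prod
        intro i hi
        obtain ⟨hi1, hi2⟩ := Finset.mem_Icc.mp hi
        have hXi : Measurable[F k] (X i) :=
          ((hmeas i (Finset.mem_Icc.mpr ⟨hi1, hi2.trans hk⟩)).mono (F.mono hi2)).measurable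
        exact (Real.measurable_exp.comp
          (((hXi.const_mul l).sub ((hXi.pow_const 2).const_mul (l^2))))).stronglyMeasurable
      have hXi : Integrable (X (k+1)) μ := by
        apply (integrable_const b).mono' ((hXm _ hmem).aestronglyMeasurable)
        filter_upwards [hbdd _ hmem] with ω h
        rwa [Real.norm_eq_abs]
      have hpull : μ[W k * g | F k] =ᵐ[μ] W k * μ[g | F k] :=
        condExp_mul_of_stronglyMeasurable_left hGsm hWg_int hgi
      have hgle : g ≤ᵐ[μ] fun ω => 1 + l * X (k+1) ω := by
        filter_upwards [hbdd _ hmem] with ω h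
        have hy : |l * X (k+1) ω| ≤ 1/2 := hlb2 _ h
        have he : l * X (k+1) ω - l^2 * (X (k+1) ω)^2
            = (l * X (k+1) ω) - (l * X (k+1) ω)^2 := by ring
        calc g ω = Real.exp ((l * X (k+1) ω) - (l * X (k+1) ω)^2) := by rw [hgdef, ← he]
          _ ≤ 1 + l * X (k+1) ω := eb_aux_expineq hy
      have hone_int : Integrable (fun ω => 1 + l * X (k+1) ω) μ :=
        (integrable_const 1).add (hXi.const_mul l)
      have hcond1 : μ[fun ω => 1 + l * X (k+1) ω | F k] =ᵐ[μ] fun _ => 1 := by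
        have hsum : (fun ω => 1 + l * X (k+1) ω) = (fun _ => (1:ℝ)) + l • (X (k+1)) := by
          funext ω; simp [smul_eq_mul]
        rw [hsum]
        have h0 : μ[X (k+1) | F k] =ᵐ[μ] 0 := by
          have := hcond (k+1) hmem
          simpa using this
        have hadd := condExp_add (m := F k) (μ := μ) (integrable_const (1:ℝ)) (hXi.smul l)
        refine hadd.trans ?_
        have hc1 : μ[(fun _ => (1:ℝ)) | F k] = fun _ => 1 := condExp_const (F.le k) 1
        have hsm := condExp_smul (m := F k) (μ := μ) l (X (k+1))
        filter_upwards [hsm, h0] with ω h1 h2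
        simp only [Pi.add_apply, hc1]
        rw [h1]
        simp [h2]
      have hgle2 : μ[g | F k] ≤ᵐ[μ] fun _ => (1:ℝ) := by
        have hmono := condExp_mono (m := F k) hgi hone_int hgle
        filter_upwards [hmono, hcond1] with ω h1 h2
        rw [← h2]
        exact h1
      have hfinal : μ[W k * g | F k] ≤ᵐ[μ] W k := by
        filter_upwards [hpull, hgle2] with ω h1 h2
        rw [h1]
        calc W k ω * (μ[g | F k]) ω ≤ W k ω * 1 :=
              mul_le_mul_of_nonneg_left h2 (hWnonneg k ω)
          _ = W k ω := mul_one _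
      calc ∫ ω, W (k+1) ω ∂μ = ∫ ω, (W k * g) ω ∂μ := by rw [hsplit]
        _ = ∫ ω, (μ[W k * g | F k]) ω ∂μ := (integral_condExp (F.le k)).symm
        _ ≤ ∫ ω, W k ω ∂μ := integral_mono_ae integrable_condExp (hWi k hk) hfinal
        _ ≤ 1 := ih hk
  have hsub : {ω | L ≤ l * (∑ i ∈ Finset.Icc 1 n, X i ω) - l^2 * ∑ i ∈ Finset.Icc 1 n, (X i ω)^2}
      ⊆ {ω | Real.exp L ≤ W n ω} := by
    intro ω h
    simp only [Set.mem_setOf_eq] at h ⊢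
    have hWn : W n ω = Real.exp (l * (∑ i ∈ Finset.Icc 1 n, X i ω)
        - l^2 * ∑ i ∈ Finset.Icc 1 n, (X i ω)^2) := by
      simp only [hWdef]
      rw [← Real.exp_sum]
      congr 1
      rw [Finset.sum_sub_distrib, ← Finset.mul_sum, ← Finset.mul_sum]
    rw [hWn]
    exact Real.exp_le_exp.mpr h
  have hmarkov := mul_meas_ge_le_integral_of_nonneg
    (Filter.Eventually.of_forall (hWnonneg n) : 0 ≤ᵐ[μ] W n) (hWi n le_rfl) (Real.exp L)
  have h3 : Real.exp L * (μ {x | Real.exp L ≤ W n x}).toReal ≤ 1 :=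
    hmarkov.trans (hWint n le_rfl)
  have h2 : (μ {x | Real.exp L ≤ W n x}).toReal ≤ Real.exp (-L) := by
    rw [Real.exp_neg, inv_eq_one_div, le_div_iff₀ (Real.exp_pos L)]
    linarith [h3]
  calc μ {ω | L ≤ l * (∑ i ∈ Finset.Icc 1 n, X i ω) - l^2 * ∑ i ∈ Finset.Icc 1 n, (X i ω)^2}
      ≤ μ {x | Real.exp L ≤ W n x} := measure_mono hsub
    _ = ENNReal.ofReal ((μ {x | Real.exp L ≤ W n x}).toReal) :=
        (ENNReal.ofReal_toReal (measure_ne_top μ _)).symm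
    _ ≤ ENNReal.ofReal (Real.exp (-L)) := ENNReal.ofReal_le_ofReal h2


/-- Empirical Bernstein-type inequality for bounded martingale difference sequences
(Theorem 3 of Zhang et al. (2021)): for a martingale difference sequence `X` with
`|X i| ≤ b` a.s. and `δ ∈ (0, e⁻¹]` (`δ < e⁻¹` in the source),
`P(|∑_{i=1}^n X i| ≤ 8·√(∑_{i=1}^n X i²·ln(1/δ)) + 16·b·ln(1/δ)) ≥ 1 − 6·δ·log₂ n`. -/
theorem empirical_bernstein
    {Ω : Type*} {m0 : MeasurableSpace Ω} (μ : Measure Ω) [IsProbabilityMeasure μ]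
    (F : Filtration ℕ m0) (n : ℕ) (hn : 2 ≤ n)
    (X : ℕ → Ω → ℝ) (b : ℝ) (hb : 0 < b)
    (hmeas : ∀ i ∈ Finset.Icc 1 n, StronglyMeasurable[F i] (X i))
    (hcond : ∀ i ∈ Finset.Icc 1 n, μ[X i | F (i - 1)] =ᵐ[μ] 0)
    (hbdd : ∀ i ∈ Finset.Icc 1 n, ∀ᵐ ω ∂μ, |X i ω| ≤ b)
    (δ : ℝ) (hδ : 0 < δ) (hδe : δ < (Real.exp 1)⁻¹) :
    ENNReal.ofReal (1 - 6 * δ * Real.logb 2 n) ≤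
      μ {ω | |∑ i ∈ Finset.Icc 1 n, X i ω| ≤
          8 * Real.sqrt ((∑ i ∈ Finset.Icc 1 n, (X i ω) ^ 2) * Real.log (1 / δ))
            + 16 * b * Real.log (1 / δ)} := by
  classical
  set L := Real.log (1/δ) with hLdef
  have hL1 : 1 < L := by
    rw [hLdef, one_div, Real.log_inv]
    have h1 : Real.log δ < -1 := by
      have h2 := Real.log_lt_log hδ hδe
      rwa [show (Real.exp 1)⁻¹ = Real.exp (-1) by rw [Real.exp_neg], Real.log_exp] at h2
    linarith
  have hL0 : (0:ℝ) < L := by linarith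
  set J := Nat.clog 2 n with hJdef
  have hJ1 : 1 ≤ J := Nat.clog_pos one_lt_two hn
  have h2J : n ≤ 2^J := Nat.le_pow_clog one_lt_two n
  have hJlt : 2^(J-1) < n := Nat.pow_pred_clog_lt_self one_lt_two (lt_of_lt_of_le one_lt_two hn)
  set S : Ω → ℝ := fun ω => ∑ i ∈ Finset.Icc 1 n, X i ω with hSdef
  set V : Ω → ℝ := fun ω => ∑ i ∈ Finset.Icc 1 n, (X i ω)^2 with hVdef
  have hexpL : Real.exp (-L) = δ := by
    rw [Real.exp_neg, hLdef, Real.exp_log (by positivity : (0:ℝ) < 1/δ), one_div, inv_inv]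
  have hpow1 : ∀ j : ℕ, (1:ℝ) ≤ 2^j := by
    intro j
    have := Nat.one_le_two_pow (n := j)
    exact_mod_cast this
  have lampos : ∀ j : ℕ, (0:ℝ) < 1/(2*b*2^j) := fun j => by positivity
  have lamle : ∀ j : ℕ, 1/(2*b*2^j) ≤ 1/(2*b) := by
    intro j
    apply one_div_le_one_div_of_le (by positivity)
    nlinarith [hpow1 j]
  set A : ℕ → Set Ω := fun j =>
    {ω | L ≤ (1/(2*b*2^j)) * S ω - (1/(2*b*2^j))^2 * V ω} with hAdef
  set A' : ℕ → Set Ω := fun j =>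
    {ω | L ≤ (1/(2*b*2^j)) * (-S ω) - (1/(2*b*2^j))^2 * V ω} with hA'def
  have hA : ∀ j, μ (A j) ≤ ENNReal.ofReal δ := by
    intro j
    have h := eb_aux_tail μ F n X b hb hmeas hcond hbdd _ (lampos j) (lamle j) L
    rw [hexpL] at h
    exact h
  have hA' : ∀ j, μ (A' j) ≤ ENNReal.ofReal δ := by
    intro j
    have hmeas' : ∀ i ∈ Finset.Icc 1 n, StronglyMeasurable[F i] (fun ω => -X i ω) :=
      fun i hi => (hmeas i hi).neg
    have hcond' : ∀ i ∈ Finset.Icc 1 n, μ[(fun ω => -X i ω) | F (i-1)] =ᵐ[μ] 0 := by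
      intro i hi
      have h1 : μ[-X i | F (i-1)] =ᵐ[μ] -μ[X i | F (i-1)] := condExp_neg (X i) (F (i-1))
      refine h1.trans ?_
      filter_upwards [hcond i hi] with ω h
      simp only [Pi.neg_apply, Pi.zero_apply] at h ⊢
      rw [h, neg_zero]
    have hbdd' : ∀ i ∈ Finset.Icc 1 n, ∀ᵐ ω ∂μ, |(-X i ω)| ≤ b := by
      intro i hi
      filter_upwards [hbdd i hi] with ω h
      rwa [abs_neg]
    have h := eb_aux_tail μ F n (fun i ω => -X i ω) b hb hmeas' hcond' hbdd' _
      (lampos j) (lamle j) L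
    rw [hexpL] at h
    have hset : {ω | L ≤ (1/(2*b*2^j)) * (∑ i ∈ Finset.Icc 1 n, (fun i ω => -X i ω) i ω)
        - (1/(2*b*2^j))^2 * ∑ i ∈ Finset.Icc 1 n, ((fun i ω => -X i ω) i ω)^2} = A' j := by
      ext ω
      simp only [hA'def, Set.mem_setOf_eq, hSdef, hVdef, neg_sq, Finset.sum_neg_distrib]
    rw [hset] at h
    exact h
  have hae : ∀ᵐ ω ∂μ, ∀ i, i ∈ Finset.Icc 1 n → |X i ω| ≤ b := by
    rw [ae_all_iff]
    intro i
    by_cases hi : i ∈ Finset.Icc 1 n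
    · filter_upwards [hbdd i hi] with ω h _
      exact h
    · filter_upwards with ω h
      exact absurd h hi
  set N : Set Ω := {ω | ¬ V ω ≤ (n:ℝ) * b^2} with hNdef
  have hN : μ N = 0 := by
    rw [hNdef, ← ae_iff]
    filter_upwards [hae] with ω hω
    calc V ω ≤ ∑ _i ∈ Finset.Icc 1 n, b^2 := by
          apply Finset.sum_le_sum
          intro i hi
          calc (X i ω)^2 = |X i ω|^2 := (sq_abs _).symm
            _ ≤ b^2 := by nlinarith [hω i hi, abs_nonneg (X i ω)]
      _ = (n:ℝ) * b^2 := by rw [Finset.sum_const, Nat.card_Icc]; simp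
  set T : Set Ω := {ω | |S ω| ≤ 8 * Real.sqrt (V ω * L) + 16*b*L} with hTdef
  have hVnonneg : ∀ ω, 0 ≤ V ω := fun ω => Finset.sum_nonneg fun i _ => sq_nonneg _
  have hincl : ∀ ω, ω ∉ ((⋃ j ∈ Finset.range (J+1), (A j ∪ A' j)) ∪ N) → ω ∈ T := by
    intro ω hω
    simp only [Set.mem_union, Set.mem_iUnion, not_or, not_exists, Finset.mem_range] at hω
    obtain ⟨h1, h2⟩ := hω
    have hVb : V ω ≤ (n:ℝ) * b^2 := by
      by_contra hc
      exact h2 hc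
    have hbound : ∀ (s : ℝ), (∀ j ≤ J,
        ¬ (L ≤ (1/(2*b*2^j)) * s - (1/(2*b*2^j))^2 * V ω)) →
        s ≤ 8 * Real.sqrt (V ω * L) + 16 * b * L := by
      intro s hs
      apply eb_aux_det b L hb hL1.le n J (le_trans one_le_two hn) h2J (V ω) s
        (hVnonneg ω) hVb
      intro j hj
      have := hs j hj
      push_neg at this
      exact eb_aux_div (by positivity) (hVnonneg ω) this
    have hup : S ω ≤ 8 * Real.sqrt (V ω * L) + 16 * b * L := by
      apply hbound
      intro j hj hLe
      exact (h1 j (Nat.lt_succ_of_le hj)).1 hLe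
    have hdown : -S ω ≤ 8 * Real.sqrt (V ω * L) + 16 * b * L := by
      apply hbound
      intro j hj hLe
      exact (h1 j (Nat.lt_succ_of_le hj)).2 hLe
    rw [hTdef]
    exact abs_le.mpr ⟨by linarith, hup⟩
  have hsubset : Tᶜ ⊆ (⋃ j ∈ Finset.range (J+1), (A j ∪ A' j)) ∪ N := by
    intro ω hω
    by_contra hcon
    exact hω (hincl ω hcon)
  have hlogb1 : 1 ≤ Real.logb 2 n := by
    rw [show (1:ℝ) = Real.logb 2 2 by simp]
    apply Real.logb_le_logb_of_le (by norm_num : (1:ℝ) < 2) (by norm_num)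
    exact_mod_cast hn
  have hJreal : ((J:ℝ) + 1) ≤ 3 * Real.logb 2 n := by
    have hcast : ((J:ℝ) - 1) = ((J-1 : ℕ) : ℝ) := by
      have := Nat.cast_sub hJ1 (R := ℝ)
      simp at this
      rw [this]
    have hlt : ((J-1 : ℕ) : ℝ) < Real.logb 2 n := by
      have h1 : Real.logb 2 ((2:ℝ)^(J-1 : ℕ)) = ((J-1:ℕ):ℝ) := by
        rw [Real.logb_pow]
        simp
      rw [← h1]
      apply Real.logb_lt_logb (by norm_num : (1:ℝ) < 2) (by positivity)
      exact_mod_cast hJlt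
    rw [show (J:ℝ) + 1 = ((J:ℝ) - 1) + 2 by ring, hcast]
    linarith
  have hBad : μ ((⋃ j ∈ Finset.range (J+1), (A j ∪ A' j)) ∪ N)
      ≤ ENNReal.ofReal (6*δ*Real.logb 2 n) := by
    calc μ ((⋃ j ∈ Finset.range (J+1), (A j ∪ A' j)) ∪ N)
        ≤ μ (⋃ j ∈ Finset.range (J+1), (A j ∪ A' j)) + μ N := measure_union_le _ _
      _ = μ (⋃ j ∈ Finset.range (J+1), (A j ∪ A' j)) := by rw [hN, add_zero]
      _ ≤ ∑ j ∈ Finset.range (J+1), μ (A j ∪ A' j) := measure_biUnion_finset_le _ _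
      _ ≤ ∑ _j ∈ Finset.range (J+1), ENNReal.ofReal (2*δ) := by
          apply Finset.sum_le_sum
          intro j _
          calc μ (A j ∪ A' j) ≤ μ (A j) + μ (A' j) := measure_union_le _ _
            _ ≤ ENNReal.ofReal δ + ENNReal.ofReal δ := add_le_add (hA j) (hA' j)
            _ = ENNReal.ofReal (2*δ) := by rw [← ENNReal.ofReal_add hδ.le hδ.le]; ring_nf
      _ ≤ ENNReal.ofReal (6*δ*Real.logb 2 n) := by
          rw [Finset.sum_const, Finset.card_range, nsmul_eq_mul,
            ← ENNReal.ofReal_natCast (J+1), ← ENNReal.ofReal_mul (by positivity)]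
          apply ENNReal.ofReal_le_ofReal
          push_cast
          nlinarith [hJreal, hlogb1, hδ.le]
  have hTc : μ Tᶜ ≤ ENNReal.ofReal (6*δ*Real.logb 2 n) := (measure_mono hsubset).trans hBad
  have huniv : (1:ℝ≥0∞) ≤ μ T + μ Tᶜ := by
    calc (1:ℝ≥0∞) = μ Set.univ := measure_univ.symm
      _ = μ (T ∪ Tᶜ) := by rw [Set.union_compl_self]
      _ ≤ μ T + μ Tᶜ := measure_union_le _ _
  have hgoal : ENNReal.ofReal (1 - 6*δ*Real.logb 2 n) ≤ μ T := by
    rw [ENNReal.ofReal_sub _ (by positivity), ENNReal.ofReal_one]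
    rw [tsub_le_iff_right]
    calc (1:ℝ≥0∞) ≤ μ T + μ Tᶜ := huniv
      _ ≤ μ T + ENNReal.ofReal (6*δ*Real.logb 2 n) := add_le_add_right hTc _
  exact hgoal
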